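/- arXiv:2205.08208 — 2 statements merged into one kernel-verified Lean document; each statement's English description precedes it below -/
import Mathlib

section
/- Let Ω be an n×n real symmetric positive definite matrix and let b > 0. Then the equation γ(Ω, θ) = b admits a unique solution θ > 0 satisfying Ω − θIₙ positive definite. -/
open Matrix

/-- The function γ(Ω, θ) = (1/2)(tr((I − θΩ⁻¹)⁻¹ − I) + log det(I − θΩ⁻¹)). -/
noncomputable def gammaFn {n : ℕ} (Ω : Matrix (Fin n) (Fin n) ℝ) (θ : ℝ) : ℝ :=
  (1 / 2) * (Matrix.trace ((1 - θ • Ω⁻¹)⁻¹ - 1) + Real.log ((1 - θ • Ω⁻¹).det))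

open Matrix

lemma decomp_aux {n : ℕ} (Ω U : Matrix (Fin n) (Fin n) ℝ) (μ : Fin n → ℝ)
    (hμ : ∀ i, μ i ≠ 0) (h1 : star U * U = 1) (h2 : U * star U = 1)
    (hspec : Ω = U * diagonal μ * star U) (θ : ℝ) :
    1 - θ • Ω⁻¹ = U * diagonal (fun i => 1 - θ * (μ i)⁻¹) * star U := by
  have hUinv : U⁻¹ = star U := Matrix.inv_eq_right_inv h2
  have hsUinv : (star U)⁻¹ = U := Matrix.inv_eq_right_inv h1
  have hdinv : (diagonal μ)⁻¹ = diagonal (fun i => (μ i)⁻¹) := by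
    apply Matrix.inv_eq_right_inv
    rw [diagonal_mul_diagonal]
    convert Matrix.diagonal_one with i
    exact mul_inv_cancel₀ (hμ i)
  have hinv : Ω⁻¹ = U * diagonal (fun i => (μ i)⁻¹) * star U := by
    rw [hspec, Matrix.mul_inv_rev, Matrix.mul_inv_rev, hUinv, hsUinv, hdinv, mul_assoc]
  rw [hinv]
  conv_lhs => rw [show (1 : Matrix (Fin n) (Fin n) ℝ) = U * 1 * star U by simp [h2]]
  rw [show θ • (U * (diagonal fun i => (μ i)⁻¹) * star U)
      = U * (θ • diagonal fun i => (μ i)⁻¹) * star U from by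
    rw [← Matrix.smul_mul, ← Matrix.mul_smul]]
  rw [← Matrix.sub_mul, ← Matrix.mul_sub]
  congr 2
  rw [← Matrix.diagonal_smul, ← Matrix.diagonal_one, ← Matrix.diagonal_sub]
  congr 1

lemma gamma_eq {n : ℕ} (Ω U : Matrix (Fin n) (Fin n) ℝ) (μ : Fin n → ℝ)
    (hμ : ∀ i, μ i ≠ 0) (h1 : star U * U = 1) (h2 : U * star U = 1)
    (hspec : Ω = U * diagonal μ * star U) (θ : ℝ)
    (hd : ∀ i, 1 - θ * (μ i)⁻¹ ≠ 0) :
    gammaFn Ω θ = (1 / 2) * ((∑ i, ((1 - θ * (μ i)⁻¹)⁻¹ - 1)) +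
      Real.log (∏ i, (1 - θ * (μ i)⁻¹))) := by
  set d : Fin n → ℝ := fun i => 1 - θ * (μ i)⁻¹ with hddef
  have hA : 1 - θ • Ω⁻¹ = U * diagonal d * star U := decomp_aux Ω U μ hμ h1 h2 hspec θ
  have hUinv : U⁻¹ = star U := Matrix.inv_eq_right_inv h2
  have hsUinv : (star U)⁻¹ = U := Matrix.inv_eq_right_inv h1
  have hdinv : (diagonal d)⁻¹ = diagonal (fun i => (d i)⁻¹) := by
    apply Matrix.inv_eq_right_inv
    rw [diagonal_mul_diagonal]
    convert Matrix.diagonal_one with i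
    exact mul_inv_cancel₀ (hd i)
  have hdet : (1 - θ • Ω⁻¹).det = ∏ i, d i := by
    rw [hA, Matrix.det_mul, Matrix.det_mul, mul_comm (U.det), mul_assoc, ← Matrix.det_mul, h2]
    simp [Matrix.det_diagonal]
  have hAinv : (1 - θ • Ω⁻¹)⁻¹ = U * diagonal (fun i => (d i)⁻¹) * star U := by
    rw [hA, Matrix.mul_inv_rev, Matrix.mul_inv_rev, hUinv, hsUinv, hdinv, mul_assoc]
  have htr : Matrix.trace ((1 - θ • Ω⁻¹)⁻¹ - 1) = ∑ i, ((d i)⁻¹ - 1) := by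
    rw [hAinv]
    conv_lhs => rw [show (1 : Matrix (Fin n) (Fin n) ℝ) = U * 1 * star U by simp [h2]]
    rw [← Matrix.sub_mul, ← Matrix.mul_sub, Matrix.trace_mul_cycle, h1, one_mul]
    simp [Matrix.trace_sub, Matrix.trace_diagonal, Matrix.trace_one, Finset.sum_sub_distrib,
      Finset.card_univ]
  rw [gammaFn, htr, hdet]

lemma posdef_conj {n : ℕ} (U A : Matrix (Fin n) (Fin n) ℝ)
    (h1 : star U * U = 1) (h2 : U * star U = 1) (hA : A.PosDef) :
    (U * A * star U).PosDef := by
  refine Matrix.PosDef.of_dotProduct_mulVec_pos ?_ fun x hx => ?_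
  · have := hA.1
    unfold Matrix.IsHermitian at *
    simp only [Matrix.star_eq_conjTranspose] at *
    rw [Matrix.conjTranspose_mul, Matrix.conjTranspose_mul, Matrix.conjTranspose_conjTranspose,
      this, mul_assoc]
  · have hy : (star U) *ᵥ x ≠ 0 := by
      intro h
      apply hx
      have : U *ᵥ ((star U) *ᵥ x) = x := by
        rw [Matrix.mulVec_mulVec, h2, Matrix.one_mulVec]
      rw [h, Matrix.mulVec_zero] at this
      exact this.symm
    have key := hA.dotProduct_mulVec_pos hy
    have heq : star x ⬝ᵥ (U * A * star U) *ᵥ x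
        = star ((star U) *ᵥ x) ⬝ᵥ A *ᵥ ((star U) *ᵥ x) := by
      rw [Matrix.star_mulVec, ← Matrix.mulVec_mulVec, ← Matrix.mulVec_mulVec,
        Matrix.dotProduct_mulVec (star x)]
      simp [Matrix.star_eq_conjTranspose]
    rw [heq]; exact key

lemma posdef_sub_iff {n : ℕ} (Ω U : Matrix (Fin n) (Fin n) ℝ) (μ : Fin n → ℝ)
    (h1 : star U * U = 1) (h2 : U * star U = 1)
    (hspec : Ω = U * diagonal μ * star U) (θ : ℝ) :
    (Ω - θ • (1 : Matrix (Fin n) (Fin n) ℝ)).PosDef ↔ ∀ i, θ < μ i := by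
  have hdec : Ω - θ • (1 : Matrix (Fin n) (Fin n) ℝ)
      = U * diagonal (fun i => μ i - θ) * star U := by
    rw [hspec]
    conv_lhs => rw [show θ • (1 : Matrix (Fin n) (Fin n) ℝ) = U * (θ • 1) * star U by
      rw [Matrix.mul_smul, Matrix.smul_mul]; simp [h2]]
    rw [← Matrix.sub_mul, ← Matrix.mul_sub]
    congr 2
    rw [show (θ • (1 : Matrix (Fin n) (Fin n) ℝ)) = diagonal (fun _ => θ) by
      ext i j; by_cases hij : i = j <;> simp [Matrix.diagonal_apply, Matrix.one_apply, hij]]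
    rw [Matrix.diagonal_sub]
  constructor
  · intro h
    have hD : (diagonal (fun i => μ i - θ)).PosDef := by
      have := posdef_conj (star U) (Ω - θ • 1) (by simpa using h2) (by simpa using h1) h
      rw [hdec] at this
      rw [star_star] at this
      have e : star U * (U * diagonal (fun i => μ i - θ) * star U) * U
          = diagonal (fun i => μ i - θ) := by
        rw [← mul_assoc, ← mul_assoc, h1, one_mul, mul_assoc, h1, mul_one]
      rwa [e] at this
    intro i
    have := Matrix.posDef_diagonal_iff.mp hD i
    linarith
  · intro h
    rw [hdec]
    exact posdef_conj U _ h1 h2 (Matrix.posDef_diagonal_iff.mpr fun i => by have := h i; linarith)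


lemma phi_nonneg {f : ℝ} (hf : 0 < f) : 0 ≤ f⁻¹ - 1 + Real.log f := by
  have h := Real.log_le_sub_one_of_pos (inv_pos.mpr hf)
  rw [Real.log_inv] at h
  linarith

lemma phi_growth {t : ℝ} (h : 0 < t) : (Real.sqrt t - 1)^2 ≤ t - 1 - Real.log t := by
  have ht : 0 ≤ t := h.le
  have hs : 0 < Real.sqrt t := Real.sqrt_pos.mpr h
  have hlog : Real.log t = 2 * Real.log (Real.sqrt t) := by
    conv_lhs => rw [← Real.mul_self_sqrt ht]
    rw [Real.log_mul hs.ne' hs.ne']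
    ring
  have h2 : Real.log (Real.sqrt t) ≤ Real.sqrt t - 1 := Real.log_le_sub_one_of_pos hs
  have hsq : Real.sqrt t ^ 2 = t := Real.sq_sqrt ht
  nlinarith [hsq]

lemma phi_hasDerivAt (c θ : ℝ) (h : 1 - θ * c ≠ 0) :
    HasDerivAt (fun x => (1 - x * c)⁻¹ - 1 + Real.log (1 - x * c))
      (θ * c ^ 2 / (1 - θ * c) ^ 2) θ := by
  have h₁ : HasDerivAt (fun x : ℝ => 1 - x * c) (-c) θ := by
    simpa using ((hasDerivAt_id θ).mul_const c).const_sub 1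
  have hinv := h₁.fun_inv h
  have hlog := h₁.log h
  have := (hinv.sub_const 1).fun_add hlog
  refine this.congr_deriv ?_
  field_simp
  ring



theorem stmt3 {n : ℕ} (hn : 0 < n) (Ω : Matrix (Fin n) (Fin n) ℝ)
    (hΩ : Ω.PosDef) (b : ℝ) (hb : 0 < b) :
    ∃! θ : ℝ, 0 < θ ∧ (Ω - θ • (1 : Matrix (Fin n) (Fin n) ℝ)).PosDef ∧
      gammaFn Ω θ = b := by
  classical
  have hne : Nonempty (Fin n) := ⟨⟨0, hn⟩⟩
  set U : Matrix (Fin n) (Fin n) ℝ := (hΩ.1.eigenvectorUnitary : Matrix (Fin n) (Fin n) ℝ)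
    with hUdef
  set μ : Fin n → ℝ := hΩ.1.eigenvalues with hμdef
  have h1 : star U * U = 1 := Matrix.mem_unitaryGroup_iff'.mp hΩ.1.eigenvectorUnitary.2
  have h2 : U * star U = 1 := Matrix.mem_unitaryGroup_iff.mp hΩ.1.eigenvectorUnitary.2
  have hspec : Ω = U * Matrix.diagonal μ * star U := by
    simpa using hΩ.1.spectral_theorem
  have hμpos : ∀ i, 0 < μ i := fun i => hΩ.eigenvalues_pos i
  have hμne : ∀ i, μ i ≠ 0 := fun i => (hμpos i).ne'
  -- minimal eigenvalue
  obtain ⟨i₀, -, hi₀⟩ := Finset.exists_min_image Finset.univ μ ⟨Classical.arbitrary _,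
    Finset.mem_univ _⟩
  set m : ℝ := μ i₀ with hmdef
  have hm : 0 < m := hμpos i₀
  have hmle : ∀ i, m ≤ μ i := fun i => hi₀ i (Finset.mem_univ i)
  -- the scalar function G
  set G : ℝ → ℝ := fun θ =>
    (1 / 2) * ∑ i, ((1 - θ * (μ i)⁻¹)⁻¹ - 1 + Real.log (1 - θ * (μ i)⁻¹)) with hGdef
  have hdpos : ∀ θ ∈ Set.Ico (0:ℝ) m, ∀ i, 0 < 1 - θ * (μ i)⁻¹ := by
    intro θ hθ i
    have : θ * (μ i)⁻¹ < 1 := by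
      rw [← div_eq_mul_inv, div_lt_one (hμpos i)]
      exact lt_of_lt_of_le hθ.2 (hmle i)
    linarith
  have hGgamma : ∀ θ, (∀ i, 0 < 1 - θ * (μ i)⁻¹) → gammaFn Ω θ = G θ := by
    intro θ hθ
    rw [gamma_eq Ω U μ hμne h1 h2 hspec θ (fun i => (hθ i).ne')]
    rw [Real.log_prod (fun i _ => (hθ i).ne')]
    rw [hGdef]
    simp only [← Finset.sum_add_distrib]
  have hposdef_iff : ∀ θ : ℝ, (Ω - θ • (1 : Matrix (Fin n) (Fin n) ℝ)).PosDef ↔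
      ∀ i, θ < μ i := fun θ => posdef_sub_iff Ω U μ h1 h2 hspec θ
  -- derivative of G
  have hG' : ∀ θ, (∀ i, 1 - θ * (μ i)⁻¹ ≠ 0) →
      HasDerivAt G ((1 / 2) * ∑ i, θ * ((μ i)⁻¹) ^ 2 / (1 - θ * (μ i)⁻¹) ^ 2) θ := by
    intro θ hθ
    exact (HasDerivAt.fun_sum (fun i _ => phi_hasDerivAt ((μ i)⁻¹) θ (hθ i))).const_mul (1 / 2)
  -- strict monotonicity on [0, m)
  have hmono : StrictMonoOn G (Set.Ico 0 m) := by
    apply strictMonoOn_of_deriv_pos (convex_Ico 0 m)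
    · intro x hx
      exact (hG' x (fun i => (hdpos x hx i).ne')).continuousAt.continuousWithinAt
    · intro x hx
      rw [interior_Ico] at hx
      have hxIco : x ∈ Set.Ico (0:ℝ) m := ⟨hx.1.le, hx.2⟩
      rw [(hG' x (fun i => (hdpos x hxIco i).ne')).deriv]
      apply mul_pos (by norm_num)
      apply Finset.sum_pos _ Finset.univ_nonempty
      intro i _
      exact div_pos (mul_pos hx.1 (pow_pos (inv_pos.mpr (hμpos i)) 2))
        (pow_pos (hdpos x hxIco i) 2)
  have hG0 : G 0 = 0 := by simp [hGdef]
  -- choose θ₁ with G θ₁ ≥ b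
  set t : ℝ := (1 + Real.sqrt (2 * b)) ^ 2 with htdef
  have hsb : 0 < Real.sqrt (2 * b) := Real.sqrt_pos.mpr (by linarith)
  have ht1 : 1 < t := by nlinarith
  have ht0 : 0 < t := by linarith
  set θ₁ : ℝ := m * (1 - t⁻¹) with hθ₁def
  have htinv : t⁻¹ < 1 := inv_lt_one_of_one_lt₀ ht1
  have htinv0 : 0 < t⁻¹ := inv_pos.mpr ht0
  have hθ₁pos : 0 < θ₁ := mul_pos hm (by linarith)
  have hθ₁lt : θ₁ < m := by
    rw [hθ₁def]
    nlinarith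
  have hθ₁Ico : θ₁ ∈ Set.Ico (0:ℝ) m := ⟨hθ₁pos.le, hθ₁lt⟩
  have hd₁ : 1 - θ₁ * m⁻¹ = t⁻¹ := by
    rw [hθ₁def]
    field_simp
    ring
  have hGθ₁ : b ≤ G θ₁ := by
    have hterm : ∀ i ∈ Finset.univ, (0:ℝ) ≤
        (1 - θ₁ * (μ i)⁻¹)⁻¹ - 1 + Real.log (1 - θ₁ * (μ i)⁻¹) :=
      fun i _ => phi_nonneg (hdpos θ₁ hθ₁Ico i)
    have hsingle := Finset.single_le_sum hterm (Finset.mem_univ i₀)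
    have hval : (1 - θ₁ * (μ i₀)⁻¹)⁻¹ - 1 + Real.log (1 - θ₁ * (μ i₀)⁻¹)
        = t - 1 - Real.log t := by
      rw [← hmdef, hd₁, inv_inv, Real.log_inv]
      ring
    have hgrow := phi_growth ht0
    have hsqrt_t : Real.sqrt t = 1 + Real.sqrt (2 * b) := by
      rw [htdef, Real.sqrt_sq (by positivity)]
    have h2b : (Real.sqrt t - 1) ^ 2 = 2 * b := by
      rw [hsqrt_t]
      rw [show (1 + Real.sqrt (2 * b) - 1) = Real.sqrt (2 * b) by ring]
      exact Real.sq_sqrt (by linarith)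
    rw [hGdef]
    simp only
    rw [hval] at hsingle
    nlinarith
  -- IVT
  have hsubset : Set.Icc (0:ℝ) θ₁ ⊆ Set.Ico 0 m :=
    fun x hx => ⟨hx.1, lt_of_le_of_lt hx.2 hθ₁lt⟩
  have hcont : ContinuousOn G (Set.Icc 0 θ₁) := fun x hx =>
    (hG' x (fun i => (hdpos x (hsubset hx) i).ne')).continuousAt.continuousWithinAt
  obtain ⟨θs, hθsmem, hθseq⟩ := intermediate_value_Icc hθ₁pos.le hcont
    (Set.mem_Icc.mpr ⟨by rw [hG0]; exact hb.le, hGθ₁⟩)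
  have hθsIco : θs ∈ Set.Ico (0:ℝ) m := hsubset hθsmem
  have hθspos : 0 < θs := by
    rcases lt_or_eq_of_le hθsmem.1 with h | h
    · exact h
    · exfalso; rw [← h, hG0] at hθseq; linarith
  have hθslt : ∀ i, θs < μ i := fun i => lt_of_lt_of_le hθsIco.2 (hmle i)
  refine ⟨θs, ⟨hθspos, (hposdef_iff θs).mpr hθslt, ?_⟩, ?_⟩
  · rw [hGgamma θs (hdpos θs hθsIco)]; exact hθseq
  · rintro y ⟨hy0, hyposdef, hyeq⟩
    have hylt := (hposdef_iff y).mp hyposdef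
    have hyIco : y ∈ Set.Ico (0:ℝ) m := ⟨hy0.le, hylt i₀⟩
    have hyG : G y = b := by
      rw [← hGgamma y (hdpos y hyIco)]; exact hyeq
    exact hmono.injOn hyIco hθsIco (by rw [hyG, hθseq])
end

section
/- Let Ω₁ and Ω₂ be n×n real symmetric positive definite matrices with Ω₂ ⪯ Ω₁ (Loewner order), and let θ ≥ 0 be such that Ω₂ − θIₙ is positive definite (hence also Ω₁ − θIₙ). Then γ(Ω₁, θ) ≤ γ(Ω₂, θ); that is, for fixed θ the function γ is monotone nonincreasing in Ω with respect to the Loewner order. -/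
open Matrix

variable {n : Type*} [Fintype n] [DecidableEq n]

section conj
variable (U : Matrix.unitaryGroup n ℝ)

local notation "V" => (U : Matrix n n ℝ)

lemma conjd_mul (d e : n → ℝ) :
    (V * diagonal d * star V) * (V * diagonal e * star V)
      = V * diagonal (fun i => d i * e i) * star V := by
  have h : star V * V = 1 := Unitary.coe_star_mul_self U
  have : (V * diagonal d * star V) * (V * diagonal e * star V)
      = V * (diagonal d * (star V * V) * diagonal e) * star V := by
    simp only [Matrix.mul_assoc]
  rw [this, h, Matrix.mul_one, diagonal_mul_diagonal]

lemma conjd_trace (d : n → ℝ) :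
    (V * diagonal d * star V).trace = ∑ i, d i := by
  rw [Matrix.trace_mul_cycle, Unitary.coe_star_mul_self U, Matrix.one_mul, trace_diagonal]

lemma VstarV : (V * star V) = 1 := mem_unitaryGroup_iff.mp U.2

lemma conjd_det (d : n → ℝ) :
    (V * diagonal d * star V).det = ∏ i, d i := by
  rw [det_mul_right_comm, VstarV, Matrix.one_mul, det_diagonal]

lemma conjd_one : (1 : Matrix n n ℝ) = V * diagonal (fun _ => (1:ℝ)) * star V := by
  rw [diagonal_one, Matrix.mul_one, VstarV]

lemma conjd_smul_one (t : ℝ) :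
    t • (1 : Matrix n n ℝ) = V * diagonal (fun _ => t) * star V := by
  rw [← smul_one_eq_diagonal, Matrix.mul_smul, Matrix.smul_mul, Matrix.mul_one, VstarV]

lemma conjd_sub (d e : n → ℝ) :
    (V * diagonal d * star V) - (V * diagonal e * star V)
      = V * diagonal (fun i => d i - e i) * star V := by
  rw [← Matrix.sub_mul, ← Matrix.mul_sub, ← diagonal_sub]

lemma conjd_inv (d : n → ℝ) (hd : ∀ i, d i ≠ 0) :
    (V * diagonal d * star V)⁻¹ = V * diagonal (fun i => (d i)⁻¹) * star V := by
  apply Matrix.inv_eq_right_inv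
  rw [conjd_mul]
  have : (fun i => d i * (d i)⁻¹) = fun _ => (1:ℝ) := by
    funext i; exact mul_inv_cancel₀ (hd i)
  rw [this, ← conjd_one]

lemma conjd_posSemidef (d : n → ℝ) (hd : ∀ i, 0 ≤ d i) :
    (V * diagonal d * star V).PosSemidef := by
  have h := Matrix.PosSemidef.diagonal (d := d) (fun i => hd i)
  have := h.mul_mul_conjTranspose_same V
  rwa [← Matrix.star_eq_conjTranspose] at this

end conj

open Matrix

variable {n : Type*} [Fintype n] [DecidableEq n]

lemma psd_trace_nonneg {M : Matrix n n ℝ} (hM : M.PosSemidef) : 0 ≤ M.trace := by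
  rw [Matrix.trace]
  apply Finset.sum_nonneg
  intro i _
  have := hM.dotProduct_mulVec_nonneg (Pi.single i 1)
  simpa [Matrix.diag] using this

open scoped MatrixOrder in
lemma psd_trace_mul_nonneg {P Q : Matrix n n ℝ} (hP : P.PosSemidef) (hQ : Q.PosSemidef) :
    0 ≤ (P * Q).trace := by
  obtain ⟨S, rfl⟩ := CStarAlgebra.nonneg_iff_eq_star_mul_self.mp hP.nonneg
  rw [Matrix.mul_assoc, Matrix.trace_mul_comm]
  exact psd_trace_nonneg (hQ.mul_mul_conjTranspose_same S)

lemma posdef_conj_s6 {A : Matrix n n ℝ} (hA : A.PosDef) {B : Matrix n n ℝ} (hB : IsUnit B) :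
    (Bᴴ * A * B).PosDef := by
  refine Matrix.PosDef.of_dotProduct_mulVec_pos ?_ fun x hx => ?_
  · have h : Aᴴ = A := hA.isHermitian.eq
    simp only [Matrix.IsHermitian, Matrix.conjTranspose_mul, Matrix.conjTranspose_conjTranspose, h]
    rw [Matrix.mul_assoc]
  · have hBx : B *ᵥ x ≠ 0 := by
      have hinj := Matrix.mulVec_injective_iff_isUnit.mpr hB
      intro h
      exact hx (hinj (by simpa using h))
    have := hA.dotProduct_mulVec_pos hBx
    have e : star x ⬝ᵥ (Bᴴ * A * B) *ᵥ x = star (B *ᵥ x) ⬝ᵥ A *ᵥ (B *ᵥ x) := by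
      rw [Matrix.mul_assoc, ← Matrix.mulVec_mulVec, Matrix.dotProduct_mulVec,
        ← Matrix.star_mulVec, ← Matrix.mulVec_mulVec]
    rw [e]; exact this

lemma spectral_real {M : Matrix n n ℝ} (hH : M.IsHermitian) :
    M = (hH.eigenvectorUnitary : Matrix n n ℝ) * diagonal hH.eigenvalues
        * star (hH.eigenvectorUnitary : Matrix n n ℝ) := by
  have := hH.spectral_theorem
  simpa using this

lemma conjd_entry_nonneg {U : Matrix.unitaryGroup n ℝ} {d : n → ℝ}
    (h : ((U : Matrix n n ℝ) * diagonal d * star (U : Matrix n n ℝ)).PosSemidef) (i : n) :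
    0 ≤ d i := by
  set V : Matrix n n ℝ := (U : Matrix n n ℝ)
  have hx := h.dotProduct_mulVec_nonneg (V *ᵥ Pi.single i 1)
  have hsv : star V * V = 1 := Unitary.coe_star_mul_self U
  have e : star (V *ᵥ Pi.single i 1) ⬝ᵥ ((V * diagonal d * star V) *ᵥ (V *ᵥ Pi.single i 1))
      = d i := by
    rw [Matrix.mulVec_mulVec, Matrix.mul_assoc (V * diagonal d), hsv, Matrix.mul_one,
      Matrix.star_mulVec, Matrix.dotProduct_mulVec, Matrix.vecMul_vecMul]
    have : star (Pi.single i 1 : n → ℝ) ᵥ* (Vᴴ * (V * diagonal d))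
        = star (Pi.single i 1 : n → ℝ) ᵥ* diagonal d := by
      rw [← Matrix.mul_assoc, ← Matrix.star_eq_conjTranspose, hsv, Matrix.one_mul]
    rw [this]
    simp [Matrix.vecMul_diagonal]
  rw [e] at hx
  exact hx

lemma conjd_entry_pos {U : Matrix.unitaryGroup n ℝ} {d : n → ℝ}
    (h : ((U : Matrix n n ℝ) * diagonal d * star (U : Matrix n n ℝ)).PosDef) (i : n) :
    0 < d i := by
  set V : Matrix n n ℝ := (U : Matrix n n ℝ)
  have hsv : star V * V = 1 := Unitary.coe_star_mul_self U
  have hne : V *ᵥ Pi.single i 1 ≠ 0 := by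
    intro h0
    have : star V *ᵥ (V *ᵥ Pi.single i 1) = (0 : n → ℝ) := by rw [h0]; simp
    rw [Matrix.mulVec_mulVec, hsv, Matrix.one_mulVec] at this
    have := congrFun this i
    simp at this
  have hx := h.dotProduct_mulVec_pos hne
  have e : star (V *ᵥ Pi.single i 1) ⬝ᵥ ((V * diagonal d * star V) *ᵥ (V *ᵥ Pi.single i 1))
      = d i := by
    rw [Matrix.mulVec_mulVec, Matrix.mul_assoc (V * diagonal d), hsv, Matrix.mul_one,
      Matrix.star_mulVec, Matrix.dotProduct_mulVec, Matrix.vecMul_vecMul]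
    have : star (Pi.single i 1 : n → ℝ) ᵥ* (Vᴴ * (V * diagonal d))
        = star (Pi.single i 1 : n → ℝ) ᵥ* diagonal d := by
      rw [← Matrix.mul_assoc, ← Matrix.star_eq_conjTranspose, hsv, Matrix.one_mul]
    rw [this]
    simp [Matrix.vecMul_diagonal]
  rw [e] at hx
  exact hx

open scoped MatrixOrder in
lemma sqrt_posDef {B : Matrix n n ℝ} (hB : B.PosDef) : (CFC.sqrt B).PosDef := by
  set T := CFC.sqrt B with hTdef
  have hTpsd : T.PosSemidef := (CFC.sqrt_nonneg B).posSemidef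
  have hTT : T * T = B := CFC.sqrt_mul_sqrt_self B hB.posSemidef.nonneg
  have hdet : T.det ≠ 0 := by
    intro h0
    have : B.det = 0 := by rw [← hTT, Matrix.det_mul, h0, mul_zero]
    exact hB.det_pos.ne' this
  have hunit : IsUnit T := (Matrix.isUnit_iff_isUnit_det T).mpr hdet.isUnit
  refine Matrix.PosDef.of_dotProduct_mulVec_pos hTpsd.isHermitian fun x hx => ?_
  rcases lt_or_eq_of_le (hTpsd.dotProduct_mulVec_nonneg x) with h | h
  · exact h
  · exfalso
    have := (hTpsd.dotProduct_mulVec_zero_iff x).mp h.symm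
    exact hx (Matrix.mulVec_injective_iff_isUnit.mpr hunit (by simpa using this))

lemma inv_sub_one_posSemidef {M : Matrix n n ℝ} (hM : M.PosDef)
    (h1 : ((1 : Matrix n n ℝ) - M).PosSemidef) : (M⁻¹ - 1).PosSemidef := by
  have hH := hM.isHermitian
  set U := hH.eigenvectorUnitary
  set μ := hH.eigenvalues
  have hspec : M = (U : Matrix n n ℝ) * diagonal μ * star (U : Matrix n n ℝ) :=
    spectral_real hH
  have hpos : ∀ i, 0 < μ i := hM.eigenvalues_pos
  have h1d : (1 : Matrix n n ℝ) - M
      = (U : Matrix n n ℝ) * diagonal (fun i => 1 - μ i) * star (U : Matrix n n ℝ) := by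
    rw [conjd_one U, hspec, conjd_sub]
  have hle : ∀ i, μ i ≤ 1 := by
    intro i
    have := conjd_entry_nonneg (h1d ▸ h1) i
    linarith
  have hinv : M⁻¹ = (U : Matrix n n ℝ) * diagonal (fun i => (μ i)⁻¹) * star (U : Matrix n n ℝ) := by
    rw [hspec, conjd_inv U μ (fun i => (hpos i).ne')]
  have : M⁻¹ - 1
      = (U : Matrix n n ℝ) * diagonal (fun i => (μ i)⁻¹ - 1) * star (U : Matrix n n ℝ) := by
    rw [hinv, conjd_one U, conjd_sub]
  rw [this]
  apply conjd_posSemidef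
  intro i
  have h1' : 1 ≤ (μ i)⁻¹ := by
    rw [le_inv_comm₀ one_pos (hpos i)]
    simpa using hle i
  linarith

open scoped MatrixOrder in
/-- Inverse is antitone wrt Loewner order on positive definite matrices. -/
lemma inv_antitone {A B : Matrix n n ℝ} (hA : A.PosDef) (hB : B.PosDef)
    (hAB : (B - A).PosSemidef) : (A⁻¹ - B⁻¹).PosSemidef := by
  set T := CFC.sqrt B with hTdef
  have hT : T.PosDef := sqrt_posDef hB
  have hTT : T * T = B := CFC.sqrt_mul_sqrt_self B hB.posSemidef.nonneg
  have hTH : Tᴴ = T := hT.isHermitian.eq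
  have hTdetu : IsUnit T.det := hT.det_pos.ne'.isUnit
  have hTunit : IsUnit T := (Matrix.isUnit_iff_isUnit_det T).mpr hTdetu
  have hTinvH : (T⁻¹)ᴴ = T⁻¹ := by rw [Matrix.conjTranspose_nonsing_inv, hTH]
  have hTiT : T⁻¹ * T = 1 := Matrix.nonsing_inv_mul T hTdetu
  have hTTi : T * T⁻¹ = 1 := Matrix.mul_nonsing_inv T hTdetu
  have hTinvUnit : IsUnit (T⁻¹) := (Matrix.isUnit_nonsing_inv_iff).mpr hTunit
  set M := T⁻¹ * A * T⁻¹ with hMdef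
  have hM : M.PosDef := by
    have := posdef_conj_s6 hA hTinvUnit
    rwa [hTinvH] at this
  have h1M : (1 : Matrix n n ℝ) - M = T⁻¹ * (B - A) * T⁻¹ := by
    rw [Matrix.mul_sub, Matrix.sub_mul, hMdef]
    congr 1
    rw [← hTT, ← Matrix.mul_assoc, hTiT, Matrix.one_mul, hTTi]
  have h1Mpsd : ((1 : Matrix n n ℝ) - M).PosSemidef := by
    rw [h1M]
    have := hAB.conjTranspose_mul_mul_same T⁻¹
    rwa [hTinvH] at this
  have hMinv : M⁻¹ = T * A⁻¹ * T := by
    rw [hMdef, Matrix.mul_inv_rev, Matrix.mul_inv_rev,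
      Matrix.nonsing_inv_nonsing_inv T hTdetu, Matrix.mul_assoc]
  have hkey := inv_sub_one_posSemidef hM h1Mpsd
  have hfin : A⁻¹ - B⁻¹ = T⁻¹ * (M⁻¹ - 1) * T⁻¹ := by
    rw [Matrix.mul_sub, Matrix.sub_mul, hMinv]
    congr 1
    · rw [← Matrix.mul_assoc, ← Matrix.mul_assoc, hTiT, Matrix.one_mul, Matrix.mul_assoc,
        hTTi, Matrix.mul_one]
    · rw [Matrix.mul_one, ← Matrix.mul_inv_rev, hTT]
  rw [hfin]
  have := hkey.conjTranspose_mul_mul_same T⁻¹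
  rwa [hTinvH] at this

lemma scalar_int {lam θ : ℝ} (hθ : 0 ≤ θ) (hlt : θ < lam) :
    ∫ t in (0:ℝ)..θ, (1/2)*(θ-t)*((lam-θ)*(lam-t))⁻¹
      = (1/2) * (((1 - θ*lam⁻¹)⁻¹ - 1) + Real.log (1 - θ*lam⁻¹)) := by
  have hlam : 0 < lam := lt_of_le_of_lt hθ hlt
  have hd : 0 < lam - θ := by linarith
  have h1 : ∀ t ∈ Set.uIcc (0:ℝ) θ,
      HasDerivAt (fun s => (1/2)*(s*(lam-θ)⁻¹ + Real.log (lam - s)))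
        ((1/2)*(θ-t)*((lam-θ)*(lam-t))⁻¹) t := by
    intro t ht
    rw [Set.uIcc_of_le hθ] at ht
    obtain ⟨ht0, htθ⟩ := ht
    have h2 : 0 < lam - t := by linarith
    have d1 : HasDerivAt (fun s : ℝ => s*(lam-θ)⁻¹) ((lam-θ)⁻¹) t := by
      simpa using (hasDerivAt_id t).mul_const ((lam-θ)⁻¹)
    have d2 : HasDerivAt (fun s : ℝ => Real.log (lam - s)) ((-1)/(lam-t)) t :=
      ((hasDerivAt_id t).const_sub lam).log h2.ne'
    have := (d1.add d2).const_mul ((1:ℝ)/2)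
    refine this.congr_deriv ?_
    field_simp
    ring
  have h2 : IntervalIntegrable (fun t => (1/2)*(θ-t)*((lam-θ)*(lam-t))⁻¹)
      MeasureTheory.volume 0 θ := by
    apply ContinuousOn.intervalIntegrable
    apply ContinuousOn.mul
    · exact (continuousOn_const.mul (continuousOn_const.sub continuousOn_id))
    · apply ContinuousOn.inv₀
      · exact continuousOn_const.mul (continuousOn_const.sub continuousOn_id)
      · intro t ht
        rw [Set.uIcc_of_le hθ] at ht
        have : 0 < lam - t := by linarith [ht.2]
        positivity
  rw [intervalIntegral.integral_eq_sub_of_hasDerivAt h1 h2]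
  have e1 : 1 - θ*lam⁻¹ = (lam-θ)/lam := by field_simp
  rw [e1, Real.log_div hd.ne' hlam.ne', inv_div]
  have e2 : lam/(lam-θ) - 1 = θ*(lam-θ)⁻¹ := by field_simp; ring
  rw [e2]
  simp only [zero_mul, Real.log_zero, sub_zero, zero_add]
  ring

lemma scalar_integrable {lam θ : ℝ} (hθ : 0 ≤ θ) (hlt : θ < lam) :
    IntervalIntegrable (fun t => (1/2)*(θ-t)*((lam-θ)*(lam-t))⁻¹)
      MeasureTheory.volume 0 θ := by
  apply ContinuousOn.intervalIntegrable
  apply ContinuousOn.mul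
  · exact (continuousOn_const.mul (continuousOn_const.sub continuousOn_id))
  · apply ContinuousOn.inv₀
    · exact continuousOn_const.mul (continuousOn_const.sub continuousOn_id)
    · intro t ht
      rw [Set.uIcc_of_le hθ] at ht
      have h1 : 0 < lam - t := by linarith [ht.2]
      have h2 : 0 < lam - θ := by linarith
      positivity

section spec

variable {N : ℕ} {Ω : Matrix (Fin N) (Fin N) ℝ} {θ : ℝ}

lemma shift_spec (hH : Ω.IsHermitian) (t : ℝ) :
    Ω - t • (1 : Matrix (Fin N) (Fin N) ℝ)
      = (hH.eigenvectorUnitary : Matrix (Fin N) (Fin N) ℝ)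
          * diagonal (fun i => hH.eigenvalues i - t)
          * star (hH.eigenvectorUnitary : Matrix (Fin N) (Fin N) ℝ) := by
  conv_lhs => rw [spectral_real hH, conjd_smul_one hH.eigenvectorUnitary t]
  rw [conjd_sub]

lemma eig_gt (hΩ : Ω.PosDef) (hpd : (Ω - θ • 1).PosDef) (i : Fin N) :
    θ < hΩ.isHermitian.eigenvalues i := by
  have h := conjd_entry_pos (U := hΩ.isHermitian.eigenvectorUnitary)
    (d := fun i => hΩ.isHermitian.eigenvalues i - θ)
    (by rw [← shift_spec hΩ.isHermitian θ]; exact hpd) i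
  linarith

lemma inv_shift_spec (hH : Ω.IsHermitian) (t : ℝ) (hne : ∀ i, hH.eigenvalues i - t ≠ 0) :
    (Ω - t • (1 : Matrix (Fin N) (Fin N) ℝ))⁻¹
      = (hH.eigenvectorUnitary : Matrix (Fin N) (Fin N) ℝ)
          * diagonal (fun i => (hH.eigenvalues i - t)⁻¹)
          * star (hH.eigenvectorUnitary : Matrix (Fin N) (Fin N) ℝ) := by
  rw [shift_spec hH t, conjd_inv _ _ hne]

lemma trace_spec (hΩ : Ω.PosDef) (hpd : (Ω - θ • 1).PosDef) (hθ : 0 ≤ θ)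
    {t : ℝ} (ht : t ≤ θ) :
    ((Ω - θ • (1 : Matrix (Fin N) (Fin N) ℝ))⁻¹ * (Ω - t • 1)⁻¹).trace
      = ∑ i, ((hΩ.isHermitian.eigenvalues i - θ)⁻¹ * (hΩ.isHermitian.eigenvalues i - t)⁻¹) := by
  have hgt := eig_gt hΩ hpd
  rw [inv_shift_spec hΩ.isHermitian θ (fun i => by have := hgt i; intro h; linarith [sub_eq_zero.mp h]),
    inv_shift_spec hΩ.isHermitian t (fun i => by have := hgt i; intro h; linarith [sub_eq_zero.mp h]),
    conjd_mul, conjd_trace]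

end spec

section spec2

variable {N : ℕ} {Ω : Matrix (Fin N) (Fin N) ℝ} {θ : ℝ}

lemma one_sub_smul_inv_spec (hΩ : Ω.PosDef) (hpd : (Ω - θ • 1).PosDef) (hθ : 0 ≤ θ) :
    (1 : Matrix (Fin N) (Fin N) ℝ) - θ • Ω⁻¹
      = (hΩ.isHermitian.eigenvectorUnitary : Matrix (Fin N) (Fin N) ℝ)
          * diagonal (fun i => 1 - θ * (hΩ.isHermitian.eigenvalues i)⁻¹)
          * star (hΩ.isHermitian.eigenvectorUnitary : Matrix (Fin N) (Fin N) ℝ) := by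
  have hgt := eig_gt hΩ hpd
  have hpos : ∀ i, 0 < hΩ.isHermitian.eigenvalues i := fun i => lt_of_le_of_lt hθ (hgt i)
  have hΩinv : Ω⁻¹ = (hΩ.isHermitian.eigenvectorUnitary : Matrix (Fin N) (Fin N) ℝ)
      * diagonal (fun i => (hΩ.isHermitian.eigenvalues i)⁻¹)
      * star (hΩ.isHermitian.eigenvectorUnitary : Matrix (Fin N) (Fin N) ℝ) := by
    conv_lhs => rw [spectral_real hΩ.isHermitian]
    rw [conjd_inv _ _ (fun i => (hpos i).ne')]
  have hsm : θ • Ω⁻¹ = (hΩ.isHermitian.eigenvectorUnitary : Matrix (Fin N) (Fin N) ℝ)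
      * diagonal (fun i => θ * (hΩ.isHermitian.eigenvalues i)⁻¹)
      * star (hΩ.isHermitian.eigenvectorUnitary : Matrix (Fin N) (Fin N) ℝ) := by
    rw [hΩinv, ← Matrix.smul_mul, ← Matrix.mul_smul]
    congr 2
    rw [← diagonal_smul]
    congr 1
  rw [hsm, conjd_one hΩ.isHermitian.eigenvectorUnitary, conjd_sub]

lemma gamma_spec (hΩ : Ω.PosDef) (hpd : (Ω - θ • 1).PosDef) (hθ : 0 ≤ θ) :
    gammaFn Ω θ = ∑ i, (1/2) * (((1 - θ * (hΩ.isHermitian.eigenvalues i)⁻¹)⁻¹ - 1)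
      + Real.log (1 - θ * (hΩ.isHermitian.eigenvalues i)⁻¹)) := by
  have hgt := eig_gt hΩ hpd
  have hpos : ∀ i, 0 < hΩ.isHermitian.eigenvalues i := fun i => lt_of_le_of_lt hθ (hgt i)
  have hfac : ∀ i, 0 < 1 - θ * (hΩ.isHermitian.eigenvalues i)⁻¹ := by
    intro i
    have h1 : θ * (hΩ.isHermitian.eigenvalues i)⁻¹ < 1 := by
      rw [← div_eq_mul_inv, div_lt_one (hpos i)]
      exact hgt i
    linarith
  rw [gammaFn, one_sub_smul_inv_spec hΩ hpd hθ, conjd_inv _ _ (fun i => (hfac i).ne'),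
    conjd_det]
  have htr : ((hΩ.isHermitian.eigenvectorUnitary : Matrix (Fin N) (Fin N) ℝ)
      * diagonal (fun i => (1 - θ * (hΩ.isHermitian.eigenvalues i)⁻¹)⁻¹)
      * star (hΩ.isHermitian.eigenvectorUnitary : Matrix (Fin N) (Fin N) ℝ)
      - 1).trace = ∑ i, ((1 - θ * (hΩ.isHermitian.eigenvalues i)⁻¹)⁻¹ - 1) := by
    rw [conjd_one hΩ.isHermitian.eigenvectorUnitary, conjd_sub, conjd_trace]
  rw [htr, Real.log_prod (fun i _ => (hfac i).ne'), ← Finset.sum_add_distrib,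
    Finset.mul_sum]

lemma gamma_int (hΩ : Ω.PosDef) (hpd : (Ω - θ • 1).PosDef) (hθ : 0 ≤ θ) :
    gammaFn Ω θ = ∫ t in (0:ℝ)..θ, ∑ i,
      (1/2)*(θ-t)*((hΩ.isHermitian.eigenvalues i - θ)*(hΩ.isHermitian.eigenvalues i - t))⁻¹ := by
  have hgt := eig_gt hΩ hpd
  rw [gamma_spec hΩ hpd hθ,
    intervalIntegral.integral_finset_sum (fun i _ => scalar_integrable hθ (hgt i))]
  exact Finset.sum_congr rfl fun i _ => (scalar_int hθ (hgt i)).symm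

end spec2

lemma integrable_sum_aux {n : ℕ} {g : Fin n → ℝ → ℝ} {θ : ℝ}
    (h : ∀ i, IntervalIntegrable (g i) MeasureTheory.volume 0 θ) :
    IntervalIntegrable (fun t => ∑ i, g i t) MeasureTheory.volume 0 θ := by
  have h2 := IntervalIntegrable.sum Finset.univ (f := g) (fun i _ => h i)
  have e : (fun t => ∑ i, g i t) = ∑ i : Fin n, g i := by
    funext t; rw [Finset.sum_apply]
  rw [e]; exact h2

set_option maxHeartbeats 1600000 in
theorem stmt6 {n : ℕ} (Ω₁ Ω₂ : Matrix (Fin n) (Fin n) ℝ)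
    (h₁ : Ω₁.PosDef) (h₂ : Ω₂.PosDef)
    (h21 : (Ω₁ - Ω₂).PosSemidef) (θ : ℝ) (hθ : 0 ≤ θ)
    (hpd : (Ω₂ - θ • (1 : Matrix (Fin n) (Fin n) ℝ)).PosDef) :
    gammaFn Ω₁ θ ≤ gammaFn Ω₂ θ := by
  have hpd1 : (Ω₁ - θ • (1 : Matrix (Fin n) (Fin n) ℝ)).PosDef := by
    have h := hpd.add_posSemidef h21
    have e : (Ω₂ - θ • (1 : Matrix (Fin n) (Fin n) ℝ)) + (Ω₁ - Ω₂)
        = Ω₁ - θ • (1 : Matrix (Fin n) (Fin n) ℝ) := by abel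
    rwa [e] at h
  have hgt1 := eig_gt h₁ hpd1
  have hgt2 := eig_gt h₂ hpd
  rw [gamma_int h₁ hpd1 hθ, gamma_int h₂ hpd hθ]
  have int1 : IntervalIntegrable (fun t => ∑ i,
      (1/2)*(θ-t)*((h₁.isHermitian.eigenvalues i - θ)*(h₁.isHermitian.eigenvalues i - t))⁻¹)
      MeasureTheory.volume 0 θ :=
    integrable_sum_aux (fun i => scalar_integrable hθ (hgt1 i))
  have int2 : IntervalIntegrable (fun t => ∑ i,
      (1/2)*(θ-t)*((h₂.isHermitian.eigenvalues i - θ)*(h₂.isHermitian.eigenvalues i - t))⁻¹)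
      MeasureTheory.volume 0 θ :=
    integrable_sum_aux (fun i => scalar_integrable hθ (hgt2 i))
  apply intervalIntegral.integral_mono_on hθ int1 int2
  intro t ht
  obtain ⟨ht0, htθ⟩ := ht
  -- positive definiteness of t-shifts
  have hps : ((θ - t) • (1 : Matrix (Fin n) (Fin n) ℝ)).PosSemidef := by
    rw [smul_one_eq_diagonal]
    exact Matrix.PosSemidef.diagonal (fun i => by simp; linarith)
  have hpd1t : (Ω₁ - t • (1 : Matrix (Fin n) (Fin n) ℝ)).PosDef := by
    have h := hpd1.add_posSemidef hps
    have e : (Ω₁ - θ • (1 : Matrix (Fin n) (Fin n) ℝ)) + (θ - t) • 1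
        = Ω₁ - t • (1 : Matrix (Fin n) (Fin n) ℝ) := by rw [sub_smul]; abel
    rwa [e] at h
  have hpd2t : (Ω₂ - t • (1 : Matrix (Fin n) (Fin n) ℝ)).PosDef := by
    have h := hpd.add_posSemidef hps
    have e : (Ω₂ - θ • (1 : Matrix (Fin n) (Fin n) ℝ)) + (θ - t) • 1
        = Ω₂ - t • (1 : Matrix (Fin n) (Fin n) ℝ) := by rw [sub_smul]; abel
    rwa [e] at h
  -- rewrite both sums as traces
  have e1 : ∑ i, (1/2)*(θ-t)*((h₁.isHermitian.eigenvalues i - θ)*(h₁.isHermitian.eigenvalues i - t))⁻¹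
      = (1/2)*(θ-t) * ((Ω₁ - θ • (1 : Matrix (Fin n) (Fin n) ℝ))⁻¹ * (Ω₁ - t • 1)⁻¹).trace := by
    rw [trace_spec h₁ hpd1 hθ htθ, Finset.mul_sum]
    exact Finset.sum_congr rfl fun i _ => by rw [mul_inv]
  have e2 : ∑ i, (1/2)*(θ-t)*((h₂.isHermitian.eigenvalues i - θ)*(h₂.isHermitian.eigenvalues i - t))⁻¹
      = (1/2)*(θ-t) * ((Ω₂ - θ • (1 : Matrix (Fin n) (Fin n) ℝ))⁻¹ * (Ω₂ - t • 1)⁻¹).trace := by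
    rw [trace_spec h₂ hpd hθ htθ, Finset.mul_sum]
    exact Finset.sum_congr rfl fun i _ => by rw [mul_inv]
  rw [e1, e2]
  have hc : 0 ≤ (1:ℝ)/2*(θ-t) := by nlinarith
  apply mul_le_mul_of_nonneg_left _ hc
  -- trace comparison
  have hP1 : ((Ω₁ - θ • (1 : Matrix (Fin n) (Fin n) ℝ))⁻¹).PosDef := hpd1.inv
  have hP2 : ((Ω₂ - θ • (1 : Matrix (Fin n) (Fin n) ℝ))⁻¹).PosDef := hpd.inv
  have hQ1 : ((Ω₁ - t • (1 : Matrix (Fin n) (Fin n) ℝ))⁻¹).PosDef := hpd1t.inv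
  have hQ2 : ((Ω₂ - t • (1 : Matrix (Fin n) (Fin n) ℝ))⁻¹).PosDef := hpd2t.inv
  have hdiffθ : ((Ω₁ - θ • (1 : Matrix (Fin n) (Fin n) ℝ)) - (Ω₂ - θ • 1)).PosSemidef := by
    have e : (Ω₁ - θ • (1 : Matrix (Fin n) (Fin n) ℝ)) - (Ω₂ - θ • 1) = Ω₁ - Ω₂ := by abel
    rwa [e]
  have hdifft : ((Ω₁ - t • (1 : Matrix (Fin n) (Fin n) ℝ)) - (Ω₂ - t • 1)).PosSemidef := by
    have e : (Ω₁ - t • (1 : Matrix (Fin n) (Fin n) ℝ)) - (Ω₂ - t • 1) = Ω₁ - Ω₂ := by abel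
    rwa [e]
  have hPsub : ((Ω₂ - θ • (1 : Matrix (Fin n) (Fin n) ℝ))⁻¹
      - (Ω₁ - θ • (1 : Matrix (Fin n) (Fin n) ℝ))⁻¹).PosSemidef :=
    inv_antitone hpd hpd1 hdiffθ
  have hQsub : ((Ω₂ - t • (1 : Matrix (Fin n) (Fin n) ℝ))⁻¹
      - (Ω₁ - t • (1 : Matrix (Fin n) (Fin n) ℝ))⁻¹).PosSemidef :=
    inv_antitone hpd2t hpd1t hdifft
  calc ((Ω₁ - θ • (1 : Matrix (Fin n) (Fin n) ℝ))⁻¹ * (Ω₁ - t • 1)⁻¹).trace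
      ≤ ((Ω₂ - θ • (1 : Matrix (Fin n) (Fin n) ℝ))⁻¹ * (Ω₁ - t • 1)⁻¹).trace := by
        have h := psd_trace_mul_nonneg hPsub hQ1.posSemidef
        rw [Matrix.sub_mul, Matrix.trace_sub] at h
        linarith
    _ ≤ ((Ω₂ - θ • (1 : Matrix (Fin n) (Fin n) ℝ))⁻¹ * (Ω₂ - t • 1)⁻¹).trace := by
        have h := psd_trace_mul_nonneg hP2.posSemidef hQsub
        rw [Matrix.mul_sub, Matrix.trace_sub] at h
        linarith
end
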